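/- Let n, d ≥ 1, let v_0, v_1, …, v_n ∈ ℝ^d with ‖v_i‖ ≥ 2 (Euclidean norm) for all 1 ≤ i ≤ n. Then the number of ε ∈ {0,1}^n with ‖v_0 + Σ_{i=1}^n ε_i v_i‖ < 1 is at most binomial(n, ⌊n/2⌋). -/

import Mathlib

open Finset

variable {ι E : Type*}

/-- Core inductive construction for Kleitman's theorem: a cover of the powerset of `s`
by `r`-separated families, paired with a symmetric chain decomposition used for counting. -/
theorem kleitman_aux [DecidableEq ι] [NormedAddCommGroup E] [NormedSpace ℝ E]
    {r : ℝ} (hr : 0 < r) (f : ι → E) :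
    ∀ s : Finset ι, (∀ i ∈ s, r ≤ ‖f i‖) →
    ∃ Q : Finset (Finset (Finset ι) × Finset (Finset ι)),
      (∀ t ∈ s.powerset, ∃ p ∈ Q, t ∈ p.1) ∧
      (∀ p ∈ Q, ∀ u ∈ p.1, ∀ v ∈ p.1, u ≠ v →
        r ≤ dist (∑ j ∈ u, f j) (∑ j ∈ v, f j)) ∧
      (∀ p ∈ Q, ∀ t ∈ p.1, t ⊆ s) ∧
      (∀ p ∈ Q, ∀ t ∈ p.2, t ⊆ s) ∧
      (∀ p ∈ Q, p.1.card = p.2.card) ∧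
      (∀ p ∈ Q, ∃ a : ℕ, 2 * a ≤ s.card ∧
        p.2.image Finset.card = Finset.Icc a (s.card - a) ∧
        Set.InjOn Finset.card (p.2 : Set (Finset ι))) ∧
      (∀ p ∈ Q, ∀ q ∈ Q, p ≠ q → Disjoint p.2 q.2) := by
  classical
  intro s
  induction s using Finset.induction_on with
  | empty =>
      intro _
      refine ⟨{({∅}, {∅})}, ?_, ?_, ?_, ?_, ?_, ?_, ?_⟩
      · intro t ht
        simp only [mem_powerset, subset_empty] at ht
        exact ⟨({∅}, {∅}), by simp, by simp [ht]⟩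
      · intro p hp u hu v hv huv
        simp only [mem_singleton] at hp
        subst hp
        simp only [mem_singleton] at hu hv
        exact absurd (hu.trans hv.symm) huv
      · intro p hp t ht
        simp only [mem_singleton] at hp; subst hp
        simp only [mem_singleton] at ht; simp [ht]
      · intro p hp t ht
        simp only [mem_singleton] at hp; subst hp
        simp only [mem_singleton] at ht; simp [ht]
      · intro p hp; simp only [mem_singleton] at hp; subst hp; rfl
      · intro p hp; simp only [mem_singleton] at hp; subst hp
        exact ⟨0, by simp, by simp, by simp [Set.InjOn]⟩
      · intro p hp q hq hpq
        simp only [mem_singleton] at hp hq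
        exact absurd (hp.trans hq.symm) hpq
  | @insert i s hi ih =>
      intro hf
      obtain ⟨Q, hcov, hsep, hsub1, hsub2, hcard, hstr, hdisj⟩ :=
        ih fun j hj => hf j (mem_insert_of_mem hj)
      set n := s.card with hn
      have hfi : f i ≠ 0 := by
        have := hf i (mem_insert_self i s)
        intro h; rw [h, norm_zero] at this; linarith
      obtain ⟨g, hg1, hgf⟩ := exists_dual_vector ℝ (f i) (norm_ne_zero_iff.2 hfi)
      have hgf' : g (f i) = ‖f i‖ := by exact_mod_cast hgf
      -- levels
      choose! lev hlev1 hlev2 hlev3 using hstr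
      -- basic facts
      have hni1 : ∀ p ∈ Q, ∀ t ∈ p.1, i ∉ t := fun p hp t ht hit =>
        hi (hsub1 p hp t ht hit)
      have hni2 : ∀ p ∈ Q, ∀ t ∈ p.2, i ∉ t := fun p hp t ht hit =>
        hi (hsub2 p hp t ht hit)
      have hins : ∀ u v : Finset ι, i ∉ u → i ∉ v → insert i u = insert i v → u = v := by
        intro u v hu hv h
        rw [← Finset.erase_insert hu, ← Finset.erase_insert hv, h]
      -- top element of each chain
      have htopex : ∀ p ∈ Q, ∃ u ∈ p.2, u.card = n - lev p := by
        intro p hp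
        have : n - lev p ∈ p.2.image Finset.card := by
          rw [hlev2 p hp]
          have := hlev1 p hp
          simp only [mem_Icc]
          omega
        simpa only [mem_image] using this
      choose! top htopmem htopcard using htopex
      -- cardinality of chains
      have hcard2 : ∀ p ∈ Q, p.2.card = n + 1 - 2 * lev p := by
        intro p hp
        have h1 : (p.2.image Finset.card).card = p.2.card :=
          Finset.card_image_of_injOn (hlev3 p hp)
        rw [hlev2 p hp, Nat.card_Icc] at h1
        have := hlev1 p hp
        omega
      have hne2 : ∀ p ∈ Q, p.2.Nonempty := fun p hp => ⟨top p, htopmem p hp⟩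
      have hne1 : ∀ p ∈ Q, p.1.Nonempty := by
        intro p hp
        rw [← Finset.card_pos, hcard p hp, Finset.card_pos]
        exact hne2 p hp
      -- max element of each separated family
      choose! tmax htmem htmax using fun p (hp : p ∈ Q) =>
        p.1.exists_max_image (fun t => g (∑ j ∈ t, f j)) (hne1 p hp)
      -- the new parts
      set Bp : Finset (Finset ι) × Finset (Finset ι) → Finset (Finset ι) × Finset (Finset ι) :=
        fun p => (insert (insert i (tmax p)) p.1, insert (insert i (top p)) p.2) with hBp
      set Cp : Finset (Finset ι) × Finset (Finset ι) → Finset (Finset ι) × Finset (Finset ι) :=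
        fun p => ((p.1.erase (tmax p)).image (insert i),
                  (p.2.erase (top p)).image (insert i)) with hCp
      refine ⟨Q.image Bp ∪ (Q.filter (fun p => 2 * lev p < n)).image Cp,
        ?_, ?_, ?_, ?_, ?_, ?_, ?_⟩
      · -- cover
        intro t ht
        rw [mem_powerset] at ht
        by_cases hit : i ∈ t
        · have hts : t.erase i ⊆ s := by
            intro x hx
            have hx1 := Finset.mem_of_mem_erase hx
            have hx2 := Finset.ne_of_mem_erase hx
            rcases Finset.mem_insert.1 (ht hx1) with h | h
            · exact absurd h hx2
            · exact h
          obtain ⟨p, hp, hmem⟩ := hcov (t.erase i) (mem_powerset.2 hts)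
          by_cases hte : t.erase i = tmax p
          · refine ⟨Bp p, mem_union_left _ (mem_image_of_mem _ hp), ?_⟩
            simp only [hBp]
            rw [← hte, Finset.insert_erase hit]
            exact mem_insert_self _ _
          · have h2 : 2 * lev p < n := by
              have hc2 : 1 < p.1.card :=
                Finset.one_lt_card.2 ⟨t.erase i, hmem, tmax p, htmem p hp, hte⟩
              rw [hcard p hp, hcard2 p hp] at hc2
              have := hlev1 p hp
              omega
            refine ⟨Cp p, mem_union_right _ (mem_image_of_mem _ (mem_filter.2 ⟨hp, h2⟩)), ?_⟩
            simp only [hCp]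
            rw [← Finset.insert_erase hit]
            exact mem_image_of_mem _ (Finset.mem_erase.2 ⟨hte, hmem⟩)
        · obtain ⟨p, hp, hmem⟩ := hcov t (mem_powerset.2 (fun x hx => by
            rcases Finset.mem_insert.1 (ht hx) with h | h
            · exact absurd (h ▸ hx) hit
            · exact h))
          exact ⟨Bp p, mem_union_left _ (mem_image_of_mem _ hp),
            mem_insert_of_mem hmem⟩
      · -- separation
        have key : ∀ p ∈ Q, ∀ u ∈ p.1,
            r ≤ dist (∑ j ∈ insert i (tmax p), f j) (∑ j ∈ u, f j) := by
          intro p hp u hu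
          rw [Finset.sum_insert (hni1 p hp _ (htmem p hp))]
          have h1 : r ≤ g (f i + ∑ j ∈ tmax p, f j - ∑ j ∈ u, f j) := by
            rw [map_sub, map_add, hgf']
            have h2 := htmax p hp u hu
            have h3 := hf i (mem_insert_self i s)
            linarith
          calc r ≤ g (f i + ∑ j ∈ tmax p, f j - ∑ j ∈ u, f j) := h1
            _ ≤ ‖g (f i + ∑ j ∈ tmax p, f j - ∑ j ∈ u, f j)‖ := le_abs_self _
            _ ≤ ‖g‖ * ‖f i + ∑ j ∈ tmax p, f j - ∑ j ∈ u, f j‖ := g.le_opNorm _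
            _ = dist (f i + ∑ j ∈ tmax p, f j) (∑ j ∈ u, f j) := by
                rw [hg1, one_mul, dist_eq_norm]
        intro p' hp' u hu v hv huv
        rcases mem_union.1 hp' with h | h
        · obtain ⟨p, hp, rfl⟩ := mem_image.1 h
          simp only [hBp] at hu hv
          rcases Finset.mem_insert.1 hu with rfl | hu' <;>
            rcases Finset.mem_insert.1 hv with rfl | hv'
          · exact absurd rfl huv
          · exact key p hp v hv'
          · rw [dist_comm]; exact key p hp u hu'
          · exact hsep p hp u hu' v hv' huv
        · obtain ⟨p, hpf, rfl⟩ := mem_image.1 h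
          have hp := (mem_filter.1 hpf).1
          simp only [hCp] at hu hv
          obtain ⟨u₀, hu₀, rfl⟩ := mem_image.1 hu
          obtain ⟨v₀, hv₀, rfl⟩ := mem_image.1 hv
          have hu₀' := Finset.mem_of_mem_erase hu₀
          have hv₀' := Finset.mem_of_mem_erase hv₀
          rw [Finset.sum_insert (hni1 p hp _ hu₀'), Finset.sum_insert (hni1 p hp _ hv₀'),
            dist_add_left]
          exact hsep p hp u₀ hu₀' v₀ hv₀' (fun h => huv (h ▸ rfl))
      · -- fst subsets
        intro p' hp' t ht
        rcases mem_union.1 hp' with h | h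
        · obtain ⟨p, hp, rfl⟩ := mem_image.1 h
          rcases Finset.mem_insert.1 ht with rfl | ht'
          · exact Finset.insert_subset_insert i (fun x hx =>
              (hsub1 p hp _ (htmem p hp)) hx)
          · exact (hsub1 p hp t ht').trans (Finset.subset_insert i s)
        · obtain ⟨p, hpf, rfl⟩ := mem_image.1 h
          have hp := (mem_filter.1 hpf).1
          obtain ⟨t₀, ht₀, rfl⟩ := mem_image.1 ht
          exact Finset.insert_subset_insert i
            (hsub1 p hp t₀ (Finset.mem_of_mem_erase ht₀))
      · -- snd subsets
        intro p' hp' t ht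
        rcases mem_union.1 hp' with h | h
        · obtain ⟨p, hp, rfl⟩ := mem_image.1 h
          rcases Finset.mem_insert.1 ht with rfl | ht'
          · exact Finset.insert_subset_insert i (fun x hx =>
              (hsub2 p hp _ (htopmem p hp)) hx)
          · exact (hsub2 p hp t ht').trans (Finset.subset_insert i s)
        · obtain ⟨p, hpf, rfl⟩ := mem_image.1 h
          have hp := (mem_filter.1 hpf).1
          obtain ⟨t₀, ht₀, rfl⟩ := mem_image.1 ht
          exact Finset.insert_subset_insert i
            (hsub2 p hp t₀ (Finset.mem_of_mem_erase ht₀))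
      · -- card equality
        intro p' hp'
        rcases mem_union.1 hp' with h | h
        · obtain ⟨p, hp, rfl⟩ := mem_image.1 h
          simp only [hBp]
          rw [Finset.card_insert_of_notMem (fun hmem =>
              hni1 p hp _ hmem (Finset.mem_insert_self i _)),
            Finset.card_insert_of_notMem (fun hmem =>
              hni2 p hp _ hmem (Finset.mem_insert_self i _)),
            hcard p hp]
        · obtain ⟨p, hpf, rfl⟩ := mem_image.1 h
          have hp := (mem_filter.1 hpf).1
          simp only [hCp]
          rw [Finset.card_image_of_injOn, Finset.card_image_of_injOn,
            Finset.card_erase_of_mem (htmem p hp),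
            Finset.card_erase_of_mem (htopmem p hp), hcard p hp]
          · intro u hu v hv huv
            exact hins u v (hni2 p hp u (Finset.mem_of_mem_erase hu))
              (hni2 p hp v (Finset.mem_of_mem_erase hv)) huv
          · intro u hu v hv huv
            exact hins u v (hni1 p hp u (Finset.mem_of_mem_erase hu))
              (hni1 p hp v (Finset.mem_of_mem_erase hv)) huv
      · -- structure of chains
        intro p' hp'
        rw [Finset.card_insert_of_notMem hi, ← hn]
        rcases mem_union.1 hp' with h | h
        · obtain ⟨p, hp, rfl⟩ := mem_image.1 h
          have ha := hlev1 p hp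
          refine ⟨lev p, by omega, ?_, ?_⟩
          · simp only [hBp, Finset.image_insert]
            rw [Finset.card_insert_of_notMem (hni2 p hp _ (htopmem p hp)),
              htopcard p hp, hlev2 p hp]
            ext k
            simp only [Finset.mem_insert, mem_Icc]
            omega
          · intro u hu v hv huv
            simp only [hBp, Finset.coe_insert, Set.mem_insert_iff, Finset.mem_coe] at hu hv
            have hbound : ∀ w ∈ p.2, w.card ≤ n - lev p := by
              intro w hw
              have : w.card ∈ p.2.image Finset.card := mem_image_of_mem _ hw
              rw [hlev2 p hp, mem_Icc] at this
              exact this.2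
            have hnewcard : (insert i (top p)).card = n - lev p + 1 := by
              rw [Finset.card_insert_of_notMem (hni2 p hp _ (htopmem p hp)),
                htopcard p hp]
            rcases hu with rfl | hu' <;> rcases hv with rfl | hv'
            · rfl
            · exfalso; rw [hnewcard] at huv; have := hbound v hv'; omega
            · exfalso; rw [hnewcard] at huv; have := hbound u hu'; omega
            · exact hlev3 p hp hu' hv' huv
        · obtain ⟨p, hpf, rfl⟩ := mem_image.1 h
          obtain ⟨hp, h2a⟩ := mem_filter.1 hpf
          have ha := hlev1 p hp
          refine ⟨lev p + 1, by omega, ?_, ?_⟩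
          · ext k
            simp only [hCp]
            constructor
            · intro hk
              obtain ⟨u', hu', rfl⟩ := mem_image.1 hk
              obtain ⟨u, hu, rfl⟩ := mem_image.1 hu'
              have hu1 := Finset.mem_of_mem_erase hu
              have hune := Finset.ne_of_mem_erase hu
              have hcu : u.card ∈ Finset.Icc (lev p) (n - lev p) := by
                rw [← hlev2 p hp]; exact mem_image_of_mem _ hu1
              rw [mem_Icc] at hcu
              have hcne : u.card ≠ n - lev p := by
                intro hc
                exact hune (hlev3 p hp hu1 (htopmem p hp) (hc.trans (htopcard p hp).symm))
              rw [Finset.card_insert_of_notMem (hni2 p hp u hu1), mem_Icc]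
              omega
            · intro hk
              rw [mem_Icc] at hk
              have hk1 : k - 1 ∈ p.2.image Finset.card := by
                rw [hlev2 p hp, mem_Icc]; omega
              obtain ⟨u, hu, hcu⟩ := mem_image.1 hk1
              have hune : u ≠ top p := by
                intro hc
                rw [hc, htopcard p hp] at hcu
                omega
              refine mem_image.2 ⟨insert i u,
                mem_image_of_mem _ (Finset.mem_erase.2 ⟨hune, hu⟩), ?_⟩
              rw [Finset.card_insert_of_notMem (hni2 p hp u hu), hcu]
              omega
          · intro u' hu' v' hv' huv
            simp only [hCp, Finset.coe_image, Set.mem_image, Finset.mem_coe] at hu' hv'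
            obtain ⟨u, hu, rfl⟩ := hu'
            obtain ⟨v, hv, rfl⟩ := hv'
            have hu1 := Finset.mem_of_mem_erase hu
            have hv1 := Finset.mem_of_mem_erase hv
            rw [Finset.card_insert_of_notMem (hni2 p hp u hu1),
              Finset.card_insert_of_notMem (hni2 p hp v hv1)] at huv
            rw [hlev3 p hp hu1 hv1 (by omega)]
      · -- disjointness
        have hBB : ∀ p ∈ Q, ∀ q ∈ Q, p ≠ q → Disjoint (Bp p).2 (Bp q).2 := by
          intro p hp q hq hpq
          rw [Finset.disjoint_left]
          intro x hx hx'
          simp only [hBp, Finset.mem_insert] at hx hx'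
          rcases hx with rfl | hx1 <;> rcases hx' with hx2 | hx2
          · have : top p = top q := hins _ _ (hni2 p hp _ (htopmem p hp))
              (hni2 q hq _ (htopmem q hq)) hx2
            exact Finset.disjoint_left.1 (hdisj p hp q hq hpq) (htopmem p hp)
              (this ▸ htopmem q hq)
          · exact hni2 q hq _ hx2 (Finset.mem_insert_self i _)
          · exact hni2 p hp _ hx1 (hx2 ▸ Finset.mem_insert_self i _)
          · exact Finset.disjoint_left.1 (hdisj p hp q hq hpq) hx1 hx2
        have hBC : ∀ p ∈ Q, ∀ q ∈ Q, Bp p ≠ Cp q → Disjoint (Bp p).2 (Cp q).2 := by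
          intro p hp q hq _
          rw [Finset.disjoint_left]
          intro x hx hx'
          simp only [hCp, mem_image] at hx'
          obtain ⟨u, hu, rfl⟩ := hx'
          have hu1 := Finset.mem_of_mem_erase hu
          simp only [hBp, Finset.mem_insert] at hx
          rcases hx with hx | hx
          · have heq : u = top p := hins u (top p) (hni2 q hq u hu1)
              (hni2 p hp _ (htopmem p hp)) hx
            by_cases hpq : p = q
            · subst hpq
              exact Finset.ne_of_mem_erase hu heq
            · exact Finset.disjoint_left.1 (hdisj p hp q hq hpq) (htopmem p hp)
                (heq ▸ hu1)
          · exact hni2 p hp _ hx (Finset.mem_insert_self i _)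
        have hCC : ∀ p ∈ Q, ∀ q ∈ Q, p ≠ q → Disjoint (Cp p).2 (Cp q).2 := by
          intro p hp q hq hpq
          rw [Finset.disjoint_left]
          intro x hx hx'
          simp only [hCp, mem_image] at hx hx'
          obtain ⟨u, hu, rfl⟩ := hx
          obtain ⟨v, hv, huv⟩ := hx'
          have hu1 := Finset.mem_of_mem_erase hu
          have hv1 := Finset.mem_of_mem_erase hv
          have : v = u := hins _ _ (hni2 q hq v hv1) (hni2 p hp u hu1) huv
          exact Finset.disjoint_left.1 (hdisj p hp q hq hpq) hu1 (this ▸ hv1)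
        intro p' hp' q' hq' hne
        rcases mem_union.1 hp' with h | h <;> rcases mem_union.1 hq' with h' | h'
        · obtain ⟨p, hp, rfl⟩ := mem_image.1 h
          obtain ⟨q, hq, rfl⟩ := mem_image.1 h'
          exact hBB p hp q hq (fun hc => hne (hc ▸ rfl))
        · obtain ⟨p, hp, rfl⟩ := mem_image.1 h
          obtain ⟨q, hqf, rfl⟩ := mem_image.1 h'
          exact hBC p hp q (mem_filter.1 hqf).1 hne
        · obtain ⟨p, hpf, rfl⟩ := mem_image.1 h
          obtain ⟨q, hq, rfl⟩ := mem_image.1 h'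
          exact (hBC q hq p (mem_filter.1 hpf).1 hne.symm).symm
        · obtain ⟨p, hpf, rfl⟩ := mem_image.1 h
          obtain ⟨q, hqf, rfl⟩ := mem_image.1 h'
          refine hCC p (mem_filter.1 hpf).1 q (mem_filter.1 hqf).1 ?_
          intro hc
          exact hne (hc ▸ rfl)

/-- Kleitman's theorem on the Littlewood–Offord problem: if `v₁, …, vₙ ∈ ℝ^d` all have
Euclidean norm at least `2`, then at most `binomial(n, ⌊n/2⌋)` of the vertices
`v₀ + ∑ i, ε i • v i` (for `ε ∈ {0,1}^n`) of the parallelepiped lie in the open unit ball. -/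
theorem kleitman_littlewood_offord (n d : ℕ) (hn : 1 ≤ n) (hd : 1 ≤ d)
    (v₀ : EuclideanSpace ℝ (Fin d)) (v : Fin n → EuclideanSpace ℝ (Fin d))
    (hv : ∀ i : Fin n, 2 ≤ ‖v i‖) :
    {ε : Fin n → Bool | ‖v₀ + ∑ j, (if ε j then (1 : ℝ) else 0) • v j‖ < 1}.ncard
      ≤ n.choose (n / 2) := by
  classical
  obtain ⟨Q, hcov, hsep, hsub1, hsub2, hcard, hstr, hdisj⟩ :=
    kleitman_aux (r := 2) (by norm_num) v Finset.univ (fun i _ => hv i)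
  have huniv : (Finset.univ : Finset (Fin n)).card = n := Finset.card_fin n
  -- count parts
  have hQcard : Q.card ≤ n.choose (n / 2) := by
    have hmidex : ∀ p ∈ Q, ∃ m ∈ p.2, m.card = n / 2 := by
      intro p hp
      obtain ⟨a, ha, him, _⟩ := hstr p hp
      rw [huniv] at ha him
      have : n / 2 ∈ p.2.image Finset.card := by
        rw [him, mem_Icc]; omega
      simpa only [mem_image] using this
    choose! mid hmidmem hmidcard using hmidex
    have : Q.card ≤ (((Finset.univ : Finset (Fin n))).powersetCard (n / 2)).card := by
      apply Finset.card_le_card_of_injOn mid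
      · intro p hp
        rw [Finset.mem_coe, Finset.mem_powersetCard]
        exact ⟨hsub2 p hp _ (hmidmem p hp), hmidcard p hp⟩
      · intro p hp q hq hmq
        by_contra hpq
        exact Finset.disjoint_left.1 (hdisj p hp q hq hpq) (hmidmem p hp)
          (hmq ▸ hmidmem q hq)
    rwa [Finset.card_powersetCard, huniv] at this
  -- the map from Boolean vectors to subsets
  set φ : (Fin n → Bool) → Finset (Fin n) := fun ε => Finset.univ.filter (fun j => ε j) with hφ
  have hφsum : ∀ ε, ∑ j, (if ε j then (1 : ℝ) else 0) • v j = ∑ j ∈ φ ε, v j := by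
    intro ε
    rw [hφ, Finset.sum_filter]
    congr 1; ext j
    split_ifs <;> simp
  have hφinj : Function.Injective φ := by
    intro ε ε' h
    funext j
    have := Finset.ext_iff.1 h j
    simp only [hφ, Finset.mem_filter, Finset.mem_univ, true_and] at this
    exact Bool.coe_iff_coe.1 this
  have hcov' : ∀ ε : Fin n → Bool, ∃ p ∈ Q, φ ε ∈ p.1 := fun ε =>
    hcov (φ ε) (Finset.mem_powerset.2 (Finset.subset_univ _))
  choose ψ hψQ hψmem using hcov'
  apply le_trans _ hQcard
  rw [← Set.ncard_coe_finset]
  refine Set.ncard_le_ncard_of_injOn ψ (fun ε _ => hψQ ε) ?_ Q.finite_toSet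
  · intro ε hε ε' hε' hee
    simp only [Set.mem_setOf_eq, hφsum] at hε hε'
    by_contra hne
    have hφne : φ ε ≠ φ ε' := fun h => hne (hφinj h)
    have hs := hsep (ψ ε) (hψQ ε) (φ ε) (hψmem ε) (φ ε') (hee ▸ hψmem ε') hφne
    rw [dist_eq_norm] at hs
    have hxy : (∑ j ∈ φ ε, v j) - ∑ j ∈ φ ε', v j
        = (v₀ + ∑ j ∈ φ ε, v j) - (v₀ + ∑ j ∈ φ ε', v j) := by abel
    rw [hxy] at hs
    have hlt : ‖(v₀ + ∑ j ∈ φ ε, v j) - (v₀ + ∑ j ∈ φ ε', v j)‖ < 2 := by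
      calc ‖(v₀ + ∑ j ∈ φ ε, v j) - (v₀ + ∑ j ∈ φ ε', v j)‖
          ≤ ‖v₀ + ∑ j ∈ φ ε, v j‖ + ‖v₀ + ∑ j ∈ φ ε', v j‖ := norm_sub_le _ _
        _ < 2 := by linarith
    linarith
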